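/- Let f ∈ ℤ[T] be a nonzero primitive squarefree polynomial in one variable. Then there exists a constant C = C(f) > 0, depending only on f, such that for every prime number p and every real number X ≥ 1, the number of integers n with |n| ≤ X and p² ∣ f(n) is at most C·(X/p² + 1). -/

import Mathlib

open Polynomial

lemma aux_squarefree_map_rat (f : Polynomial ℤ) (hf0 : f ≠ 0) (hprim : f.IsPrimitive)
    (hsf : Squarefree f) : Squarefree (f.map (Int.castRingHom ℚ)) := by
  intro g hg
  by_contra hgu
  have hinj : Function.Injective (Int.castRingHom ℚ) := Int.cast_injective
  have hfm0 : f.map (Int.castRingHom ℚ) ≠ 0 := by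
    simpa [Polynomial.map_eq_zero_iff hinj] using hf0
  have hg0 : g ≠ 0 := by rintro rfl; simp at hg; exact hfm0 hg
  obtain ⟨c, hc⟩ := IsLocalization.integerNormalization_map_to_map (nonZeroDivisors ℤ) g
  set g1 := IsLocalization.integerNormalization (nonZeroDivisors ℤ) g with hg1def
  have hc0 : (c : ℤ) ≠ 0 := nonZeroDivisors.coe_ne_zero c
  have hcQ : ((c : ℤ) : ℚ) ≠ 0 := Int.cast_ne_zero.mpr hc0
  rw [algebraMap_int_eq] at hc
  have hmap1 : g1.map (Int.castRingHom ℚ) = C ((c : ℤ) : ℚ) * g := by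
    rw [hc, ← Int.cast_smul_eq_zsmul ℚ, Polynomial.smul_eq_C_mul]
  have hg10 : g1 ≠ 0 := by
    intro h
    rw [h, Polynomial.map_zero] at hmap1
    exact hg0 (by simpa [hcQ] using hmap1.symm)
  have hcont : ((g1.content : ℤ) : ℚ) ≠ 0 := by
    simpa using (Polynomial.content_eq_zero_iff (p := g1)).not.mpr hg10
  set g0 := g1.primPart with hg0def
  have hmap0 : C ((g1.content : ℤ) : ℚ) * g0.map (Int.castRingHom ℚ) = C ((c : ℤ) : ℚ) * g := by
    rw [← hmap1]
    conv_rhs => rw [g1.eq_C_content_mul_primPart]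
    rw [Polynomial.map_mul, Polynomial.map_C]
    simp
    exact Or.inl rfl
  set w : ℚ := ((g1.content : ℤ) : ℚ)⁻¹ * ((c : ℤ) : ℚ) with hwdef
  have hw0 : w ≠ 0 := mul_ne_zero (inv_ne_zero hcont) hcQ
  have hassoc : g0.map (Int.castRingHom ℚ) = C w * g := by
    apply mul_left_cancel₀ (show C ((g1.content : ℤ) : ℚ) ≠ 0 from fun h => hcont (by simpa using h))
    rw [hmap0, ← mul_assoc, ← C_mul, hwdef, ← mul_assoc, mul_inv_cancel₀ hcont, one_mul]
  have hunitC : IsUnit (C w) := Polynomial.isUnit_C.mpr hw0.isUnit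
  have hdvdQ : (g0 * g0).map (Int.castRingHom ℚ) ∣ f.map (Int.castRingHom ℚ) := by
    rw [Polynomial.map_mul, hassoc]
    have h2 : C w * g * (C w * g) = g * g * C w * C w := by ring
    rw [h2]
    exact (hunitC.mul_right_dvd).mpr ((hunitC.mul_right_dvd).mpr hg)
  have hdvdZ : g0 * g0 ∣ f :=
    (Polynomial.IsPrimitive.Int.dvd_iff_map_cast_dvd_map_cast _ _
      (g1.isPrimitive_primPart.mul g1.isPrimitive_primPart)).mpr hdvdQ
  have hu0 : IsUnit g0 := hsf g0 hdvdZ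
  have hu0m : IsUnit (g0.map (Int.castRingHom ℚ)) := hu0.map (Polynomial.mapRingHom _)
  rw [hassoc] at hu0m
  exact hgu (isUnit_of_mul_isUnit_right hu0m)

lemma aux_bezout (f : Polynomial ℤ) (hf0 : f ≠ 0) (hprim : f.IsPrimitive)
    (hsf : Squarefree f) :
    ∃ (a b : Polynomial ℤ) (D : ℤ), D ≠ 0 ∧ a * f + b * derivative f = C D := by
  have hsq : Squarefree (f.map (Int.castRingHom ℚ)) := aux_squarefree_map_rat f hf0 hprim hsf
  have hsep : (f.map (Int.castRingHom ℚ)).Separable :=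
    PerfectField.separable_iff_squarefree.mpr hsq
  obtain ⟨u, v, huv⟩ := hsep
  obtain ⟨c1, hc1⟩ := IsLocalization.integerNormalization_map_to_map (nonZeroDivisors ℤ) u
  obtain ⟨c2, hc2⟩ := IsLocalization.integerNormalization_map_to_map (nonZeroDivisors ℤ) v
  set a1 := IsLocalization.integerNormalization (nonZeroDivisors ℤ) u
  set b1 := IsLocalization.integerNormalization (nonZeroDivisors ℤ) v
  rw [algebraMap_int_eq] at hc1 hc2
  have h1 : a1.map (Int.castRingHom ℚ) = C ((c1 : ℤ) : ℚ) * u := by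
    rw [hc1, ← Int.cast_smul_eq_zsmul ℚ, Polynomial.smul_eq_C_mul]
  have h2 : b1.map (Int.castRingHom ℚ) = C ((c2 : ℤ) : ℚ) * v := by
    rw [hc2, ← Int.cast_smul_eq_zsmul ℚ, Polynomial.smul_eq_C_mul]
  refine ⟨C (c2 : ℤ) * a1, C (c1 : ℤ) * b1, (c1 : ℤ) * (c2 : ℤ),
    mul_ne_zero (nonZeroDivisors.coe_ne_zero c1) (nonZeroDivisors.coe_ne_zero c2), ?_⟩
  have hinj : Function.Injective (Polynomial.map (Int.castRingHom ℚ)) :=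
    Polynomial.map_injective _ Int.cast_injective
  apply hinj
  rw [Polynomial.map_add, Polynomial.map_mul, Polynomial.map_mul, Polynomial.map_mul,
    Polynomial.map_mul, Polynomial.map_C, Polynomial.map_C, Polynomial.map_C, h1, h2,
    ← Polynomial.derivative_map]
  simp only [Int.coe_castRingHom, Int.cast_mul, C_mul]
  linear_combination (C ((c1:ℚ)) * C ((c2:ℚ))) * huv

lemma aux_roots_good (f a b : Polynomial ℤ) (D : ℤ)
    (hprim : f.IsPrimitive) (hD : a * f + b * derivative f = C D)
    (p : ℕ) (hp : p.Prime) (hpD : ¬ ((p : ℤ) ∣ D)) :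
    Nat.card {x : ZMod (p ^ 2) // (f.map (Int.castRingHom (ZMod (p ^ 2)))).eval x = 0}
      ≤ f.natDegree := by
  haveI : Fact p.Prime := ⟨hp⟩
  haveI : NeZero (p ^ 2) := ⟨pow_ne_zero 2 hp.ne_zero⟩
  set φ : ℤ →+* ZMod (p ^ 2) := Int.castRingHom (ZMod (p ^ 2))
  set χ : ℤ →+* ZMod p := Int.castRingHom (ZMod p)
  set ψ : ZMod (p ^ 2) →+* ZMod p := ZMod.castHom (dvd_pow_self p two_ne_zero) (ZMod p)
  have hcomp : ψ.comp φ = χ := RingHom.ext_int _ _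
  have hmm : ∀ q : Polynomial ℤ, q.map χ = (q.map φ).map ψ := by
    intro q; rw [Polynomial.map_map, hcomp]
  have hevalψ : ∀ (q : Polynomial ℤ) (x : ZMod (p ^ 2)),
      (q.map χ).eval (ψ x) = ψ ((q.map φ).eval x) := by
    intro q x
    rw [hmm, Polynomial.eval_map, Polynomial.eval₂_hom]
  -- p doesn't divide f mod p
  have hfchi : f.map χ ≠ 0 := by
    intro h
    have hdvd : ∀ i, (p : ℤ) ∣ f.coeff i := by
      intro i
      have := congrArg (fun q => Polynomial.coeff q i) h
      simpa [Polynomial.coeff_map, ZMod.intCast_zmod_eq_zero_iff_dvd] using this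
    have : IsUnit ((p : ℤ)) := hprim ((p : ℤ)) ((Polynomial.C_dvd_iff_dvd_coeff _ f).mpr hdvd)
    have h2 := hp.one_lt
    rcases Int.isUnit_iff.mp this with h1 | h1
    · have : p = 1 := by exact_mod_cast h1
      omega
    · have h3 : (0:ℤ) ≤ (p:ℤ) := Int.natCast_nonneg p
      omega
  -- derivative nonzero at roots mod p
  have hder : ∀ x : ZMod (p ^ 2), (f.map φ).eval x = 0 →
      ((derivative f).map χ).eval (ψ x) ≠ 0 := by
    intro x hx
    have hDχ := congrArg (Polynomial.map χ) hD
    rw [Polynomial.map_add, Polynomial.map_mul, Polynomial.map_mul, Polynomial.map_C] at hDχ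
    have := congrArg (Polynomial.eval (ψ x)) hDχ
    simp only [Polynomial.eval_add, Polynomial.eval_mul, Polynomial.eval_C] at this
    rw [hevalψ f x, hx, map_zero, mul_zero, zero_add] at this
    intro h0
    rw [h0, mul_zero] at this
    exact (ZMod.intCast_zmod_eq_zero_iff_dvd D p).not.mpr hpD this.symm
  -- the injection from roots mod p² to roots mod p
  set RT := (f.map χ).roots.toFinset
  have hmemRT : ∀ x : {x : ZMod (p ^ 2) // (f.map φ).eval x = 0}, ψ x.1 ∈ RT := by
    intro x
    rw [Multiset.mem_toFinset, Polynomial.mem_roots hfchi]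
    rw [Polynomial.IsRoot, hevalψ f x.1, x.2, map_zero]
  have hinj : Function.Injective
      (fun x : {x : ZMod (p ^ 2) // (f.map φ).eval x = 0} =>
        (⟨ψ x.1, hmemRT x⟩ : {z // z ∈ RT})) := by
    intro x y hxy
    simp only [Subtype.mk.injEq] at hxy
    set s := y.1 - x.1 with hsdef
    clear_value s
    have hψs : ψ s = 0 := by rw [hsdef, map_sub, hxy, sub_self]
    have hpv : p ∣ s.val := by
      rw [← ZMod.natCast_eq_zero_iff, ← map_natCast ψ, ZMod.natCast_zmod_val]
      exact hψs
    obtain ⟨k, hk⟩ := hpv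
    have hs2 : s = ((p : ZMod (p ^ 2)) * (k : ZMod (p ^ 2))) := by
      rw [← Nat.cast_mul, ← hk, ZMod.natCast_zmod_val]
    have hss : s * s = 0 := by
      have : s * s = ((p ^ 2 : ℕ) : ZMod (p ^ 2)) * ((k : ZMod (p ^ 2)) * k) := by
        rw [hs2]; push_cast; ring
      rw [this, ZMod.natCast_self, zero_mul]
    obtain ⟨kk, hkk⟩ := (f.map φ).binomExpansion x.1 s
    have hxs : x.1 + s = y.1 := by rw [hsdef]; ring
    rw [hxs] at hkk
    rw [y.2] at hkk
    rw [x.2] at hkk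
    rw [zero_add] at hkk
    rw [pow_two s] at hkk
    rw [hss] at hkk
    rw [mul_zero, add_zero] at hkk
    -- derivative at x is a unit
    set d := (derivative (f.map φ)).eval x.1 with hddef
    have hψd : ψ d ≠ 0 := by
      have heq : ψ d = ((derivative f).map χ).eval (ψ x.1) := by
        rw [hddef, Polynomial.derivative_map]
        exact (hevalψ (derivative f) x.1).symm
      rw [heq]
      exact hder x.1 x.2
    have hdunit : IsUnit d := by
      rw [← ZMod.natCast_zmod_val d]
      rw [ZMod.isUnit_iff_coprime]
      have hnd : ¬ p ∣ d.val := by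
        intro hpd
        apply hψd
        rw [← ZMod.natCast_zmod_val d, map_natCast ψ]
        exact (ZMod.natCast_eq_zero_iff _ _).mpr hpd
      exact Nat.Coprime.pow_right 2 ((Nat.coprime_comm).mp ((hp.coprime_iff_not_dvd).mpr hnd))
    have hs0 : s = 0 := (hdunit.mul_right_eq_zero).mp hkk.symm
    have : x.1 = y.1 := by
      have := sub_eq_zero.mp (hsdef ▸ hs0)
      exact this.symm
    exact Subtype.ext this
  calc Nat.card {x : ZMod (p ^ 2) // (f.map φ).eval x = 0}
      ≤ Nat.card {z // z ∈ RT} := Nat.card_le_card_of_injective _ hinj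
    _ = RT.card := Nat.card_eq_finsetCard RT
    _ ≤ Multiset.card (f.map χ).roots := (f.map χ).roots.toFinset_card_le
    _ ≤ (f.map χ).natDegree := Polynomial.card_roots' _
    _ ≤ f.natDegree := Polynomial.natDegree_map_le

lemma aux_count (m : ℕ) (hm : 0 < m) (T : Set (ZMod m)) (X : ℝ) (hX : 1 ≤ X) :
    (Nat.card {n : ℤ | |(n : ℝ)| ≤ X ∧ (n : ZMod m) ∈ T} : ℝ)
      ≤ (Nat.card T : ℝ) * (4 * X / m + 2) := by
  haveI : NeZero m := ⟨hm.ne'⟩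
  have hm' : (0 : ℤ) < m := by exact_mod_cast hm
  have hmR : (0 : ℝ) < m := by exact_mod_cast hm
  set c : ℤ := ⌈X⌉ with hcdef
  have hc1 : (1 : ℤ) ≤ c := by
    have : 0 < c := Int.ceil_pos.mpr (by linarith)
    omega
  have hcX : (c : ℝ) ≤ 2 * X := by
    have := Int.ceil_lt_add_one X
    rw [← hcdef] at this
    linarith
  set I : Set ℤ := Set.Icc ((-c) / (m : ℤ)) (c / (m : ℤ)) with hIdef
  haveI : Finite ↥I := (Set.finite_Icc _ _).to_subtype
  -- the injection
  set S := {n : ℤ | |(n : ℝ)| ≤ X ∧ (n : ZMod m) ∈ T} with hSdef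
  have hmemI : ∀ n : ↥S, n.1 / (m : ℤ) ∈ I := by
    rintro ⟨n, hn1, hn2⟩
    have h1 : (n : ℝ) ≤ X := (abs_le.mp hn1).2
    have h2 : -X ≤ (n : ℝ) := (abs_le.mp hn1).1
    have hnc : n ≤ c := by
      have : (n : ℝ) ≤ (c : ℝ) := le_trans h1 (Int.le_ceil X)
      exact_mod_cast this
    have hcn : -c ≤ n := by
      have hXc : X ≤ (c : ℝ) := Int.le_ceil X
      have : -(c : ℝ) ≤ (n : ℝ) := le_trans (by linarith) h2
      exact_mod_cast this
    exact ⟨Int.ediv_le_ediv hm' hcn, Int.ediv_le_ediv hm' hnc⟩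
  have hinj : Function.Injective (fun n : ↥S =>
      ((⟨(n.1 : ZMod m), n.2.2⟩, ⟨n.1 / (m : ℤ), hmemI n⟩) : ↥T × ↥I)) := by
    rintro ⟨n₁, hn₁⟩ ⟨n₂, hn₂⟩ h
    simp only [Prod.mk.injEq, Subtype.mk.injEq] at h
    obtain ⟨h1, h2⟩ := h
    have hmod : n₁ % (m : ℤ) = n₂ % (m : ℤ) := by
      rwa [ZMod.intCast_eq_intCast_iff] at h1
    have e1 := Int.mul_ediv_add_emod n₁ (m : ℤ)
    have e2 := Int.mul_ediv_add_emod n₂ (m : ℤ)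
    apply Subtype.ext
    show n₁ = n₂
    calc n₁ = (m : ℤ) * (n₁ / (m : ℤ)) + n₁ % (m : ℤ) := e1.symm
      _ = (m : ℤ) * (n₂ / (m : ℤ)) + n₂ % (m : ℤ) := by rw [h2, hmod]
      _ = n₂ := e2
  have hcard : Nat.card ↥S ≤ Nat.card ↥T * Nat.card ↥I := by
    calc Nat.card ↥S ≤ Nat.card (↥T × ↥I) := Nat.card_le_card_of_injective _ hinj
      _ = Nat.card ↥T * Nat.card ↥I := Nat.card_prod _ _
  -- cardinality of I
  have hIcard : Nat.card ↥I = ((c / (m : ℤ)) + 1 - ((-c) / (m : ℤ))).toNat := by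
    rw [hIdef, ← Finset.coe_Icc, Nat.card_coe_set_eq, Set.ncard_coe_finset, Int.card_Icc]
  -- real bound on upper endpoint
  have hub : ((c / (m : ℤ) : ℤ) : ℝ) ≤ (c : ℝ) / m := by
    rw [le_div_iff₀ hmR]
    have := Int.ediv_mul_le c hm'.ne'
    exact_mod_cast this
  have hlb : -(((-c) / (m : ℤ) : ℤ) : ℝ) ≤ (c : ℝ) / m + 1 := by
    have := Int.lt_ediv_add_one_mul_self (-c) hm'
    have hR : (-c : ℝ) < (((-c) / (m : ℤ) : ℤ) : ℝ) * m + m := by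
      exact_mod_cast (by linarith [this] : (-c : ℤ) < ((-c) / (m : ℤ)) * m + m)
    rw [div_add' _ _ _ hmR.ne', le_div_iff₀ hmR]
    nlinarith
  have hIreal : (Nat.card ↥I : ℝ) ≤ 4 * X / m + 2 := by
    rw [hIcard]
    have hnn : (0 : ℤ) ≤ (c / (m : ℤ)) + 1 - ((-c) / (m : ℤ)) := by
      have := Int.ediv_le_ediv hm' (by linarith : -c ≤ c)
      omega
    have hcast : (((c / (m : ℤ) + 1 - (-c) / (m : ℤ)).toNat : ℕ) : ℝ)
        = ((c / (m : ℤ) + 1 - (-c) / (m : ℤ) : ℤ) : ℝ) := by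
      exact_mod_cast congrArg (fun z : ℤ => (z : ℝ)) (Int.toNat_of_nonneg hnn)
    rw [hcast]
    push_cast
    have h4 : (c : ℝ) / m ≤ 2 * X / m := by gcongr
    have h5 : 4 * X / (m : ℝ) = 2 * (2 * X / m) := by ring
    linarith [hub, hlb, h4, h5]
  calc (Nat.card ↥S : ℝ) ≤ (Nat.card ↥T : ℝ) * Nat.card ↥I := by exact_mod_cast hcard
    _ ≤ (Nat.card ↥T : ℝ) * (4 * X / m + 2) :=
        mul_le_mul_of_nonneg_left hIreal (Nat.cast_nonneg _)

/-- Let `f ∈ ℤ[T]` be a nonzero primitive squarefree polynomial. Then there is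
a constant `C = C(f) > 0`, depending only on `f`, such that for every prime `p` and every real
`X ≥ 1`, the number of integers `n` with `|n| ≤ X` and `p² ∣ f(n)` is at most `C·(X/p² + 1)`. -/
theorem statement_0 (f : Polynomial ℤ) (hf0 : f ≠ 0) (hprim : f.IsPrimitive)
    (hsf : Squarefree f) :
    ∃ C : ℝ, 0 < C ∧ ∀ p : ℕ, p.Prime → ∀ X : ℝ, 1 ≤ X →
      (Nat.card {n : ℤ | |(n : ℝ)| ≤ X ∧ ((p : ℤ)) ^ 2 ∣ f.eval n} : ℝ)
        ≤ C * (X / (p : ℝ) ^ 2 + 1) := by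
  obtain ⟨a, b, D, hD0, hDeq⟩ := aux_bezout f hf0 hprim hsf
  refine ⟨4 * ((D : ℝ) ^ 2 + f.natDegree + 1), by positivity, ?_⟩
  intro p hp X hX
  haveI : Fact p.Prime := ⟨hp⟩
  have hp2 : 0 < p ^ 2 := pow_pos hp.pos 2
  haveI : NeZero (p ^ 2) := ⟨hp2.ne'⟩
  have hp2R : (0 : ℝ) < (p : ℝ) ^ 2 := by
    have : (0 : ℝ) < p := by exact_mod_cast hp.pos
    positivity
  set φ : ℤ →+* ZMod (p ^ 2) := Int.castRingHom (ZMod (p ^ 2)) with hφdef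
  set T : Set (ZMod (p ^ 2)) := {x | (f.map φ).eval x = 0} with hTdef
  have hset : {n : ℤ | |(n : ℝ)| ≤ X ∧ ((p : ℤ)) ^ 2 ∣ f.eval n}
      = {n : ℤ | |(n : ℝ)| ≤ X ∧ ((n : ZMod (p ^ 2)) ∈ T)} := by
    ext n
    simp only [Set.mem_setOf_eq, and_congr_right_iff]
    intro _
    have heval : (f.map φ).eval ((n : ℤ) : ZMod (p ^ 2)) = φ (f.eval n) := by
      rw [show ((n : ℤ) : ZMod (p ^ 2)) = φ n from rfl, Polynomial.eval_map,
        Polynomial.eval₂_hom]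
    constructor
    · intro hdvd
      show (f.map φ).eval _ = 0
      rw [heval, hφdef]
      rw [show (Int.castRingHom (ZMod (p ^ 2))) (f.eval n) = ((f.eval n : ℤ) : ZMod (p ^ 2))
        from rfl, ZMod.intCast_zmod_eq_zero_iff_dvd]
      exact_mod_cast (by push_cast; exact hdvd : ((p ^ 2 : ℕ) : ℤ) ∣ f.eval n)
    · intro hmem
      have h0 : φ (f.eval n) = 0 := by rw [← heval]; exact hmem
      have : ((p ^ 2 : ℕ) : ℤ) ∣ f.eval n := by
        rw [← ZMod.intCast_zmod_eq_zero_iff_dvd]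
        exact h0
      push_cast at this
      exact this
  rw [hset]
  have hcount := aux_count (p ^ 2) hp2 T X hX
  have hcastm : ((p ^ 2 : ℕ) : ℝ) = (p : ℝ) ^ 2 := by push_cast; ring
  rw [hcastm] at hcount
  refine le_trans hcount ?_
  set Y : ℝ := X / (p : ℝ) ^ 2 with hYdef
  have hY0 : 0 ≤ Y := by positivity
  have hD2 : (0 : ℝ) ≤ (D : ℝ) ^ 2 := sq_nonneg _
  have hd0 : (0 : ℝ) ≤ (f.natDegree : ℝ) := Nat.cast_nonneg _
  by_cases hpD : (p : ℤ) ∣ D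
  · -- bad prime: trivial bound on the number of roots
    have hTcard : Nat.card ↥T ≤ p ^ 2 := by
      calc Nat.card ↥T ≤ Nat.card (ZMod (p ^ 2)) :=
            Nat.card_le_card_of_injective Subtype.val Subtype.val_injective
        _ = p ^ 2 := Nat.card_zmod _
    have hpD2 : (p : ℝ) ^ 2 ≤ (D : ℝ) ^ 2 := by
      have h1 : (p : ℤ) ≤ |D| := Int.le_of_dvd (abs_pos.mpr hD0) ((dvd_abs _ _).mpr hpD)
      have h2 : (p : ℝ) ≤ |(D : ℝ)| := by
        rw [← Int.cast_abs]
        exact_mod_cast h1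
      have h3 : (0 : ℝ) ≤ (p : ℝ) := Nat.cast_nonneg _
      nlinarith [abs_nonneg ((D : ℝ)), sq_abs ((D : ℝ))]
    have hTR : (Nat.card ↥T : ℝ) ≤ (p : ℝ) ^ 2 := by exact_mod_cast hTcard
    have hXY : X = Y * (p : ℝ) ^ 2 := by
      rw [hYdef, div_mul_cancel₀ X hp2R.ne']
    have h4Y : 4 * X / (p : ℝ) ^ 2 + 2 = 4 * Y + 2 := by
      rw [hYdef]; ring
    rw [h4Y]
    nlinarith [mul_le_mul_of_nonneg_right hTR (by linarith : (0:ℝ) ≤ 4 * Y + 2),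
      mul_le_mul_of_nonneg_right hpD2 hY0]
  · -- good prime: at most natDegree roots
    have hTcard : Nat.card ↥T ≤ f.natDegree := by
      have := aux_roots_good f a b D hprim hDeq p hp hpD
      exact this
    have hTR : (Nat.card ↥T : ℝ) ≤ (f.natDegree : ℝ) := by exact_mod_cast hTcard
    have h4Y : 4 * X / (p : ℝ) ^ 2 + 2 = 4 * Y + 2 := by
      rw [hYdef]; ring
    rw [h4Y]
    nlinarith [mul_le_mul_of_nonneg_right hTR (by linarith : (0:ℝ) ≤ 4 * Y + 2)]
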